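/- arXiv:1104.1690 — 3 statements merged into one kernel-verified Lean document; each statement's English description precedes it below -/
import Mathlib

section
/- For every matrix A ∈ ℂ^{m×n} and every pair of positive definite Hermitian matrices M ∈ ℂ^{m×m} and N ∈ ℂ^{n×n}, there exists a matrix X ∈ ℂ^{n×m} satisfying the four weighted Penrose equations: (1) AXA = A, (2) XAX = X, (3) (MAX)* = MAX, (4) (NXA)* = NXA. That is, the weighted Moore-Penrose inverse A†_{M,N} always exists. -/
open Matrix ComplexOrder

/-- Existence of the (unweighted) Moore–Penrose inverse over ℂ. -/
theorem moore_penrose_exists {m n : ℕ} (B : Matrix (Fin m) (Fin n) ℂ) :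
    ∃ P : Matrix (Fin n) (Fin m) ℂ,
      B * P * B = B ∧ P * B * P = P ∧ (B * P)ᴴ = B * P ∧ (P * B)ᴴ = P * B := by
  set C : Matrix (Fin n) (Fin n) ℂ := Bᴴ * B with hCdef
  have hC : C.IsHermitian := isHermitian_conjTranspose_mul_self B
  set U : Matrix (Fin n) (Fin n) ℂ := (hC.eigenvectorUnitary : Matrix (Fin n) (Fin n) ℂ) with hUdef
  have hU1 : star U * U = 1 := (Matrix.mem_unitaryGroup_iff').mp hC.eigenvectorUnitary.2
  set d : Fin n → ℂ := (fun i => (hC.eigenvalues i : ℂ)) with hddef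
  set g : Fin n → ℂ := (fun i => ((hC.eigenvalues i)⁻¹ : ℂ)) with hgdef
  have hspec : C = U * diagonal d * star U := hC.spectral_theorem
  set Cp : Matrix (Fin n) (Fin n) ℂ := U * diagonal g * star U with hCpdef
  have hdgd : (fun i => d i * (g i * d i)) = d := by
    funext i
    simp only [hddef, hgdef]
    rcases eq_or_ne (hC.eigenvalues i) 0 with h | h
    · simp [h]
    · field_simp
  have hgdg : (fun i => g i * (d i * g i)) = g := by
    funext i
    simp only [hddef, hgdef]
    rcases eq_or_ne (hC.eigenvalues i) 0 with h | h
    · simp [h]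
    · field_simp
  have hcommfun : (fun i => g i * d i) = (fun i => d i * g i) := by
    funext i; ring
  have hCCpC : C * Cp * C = C := by
    conv_lhs => rw [hspec, hCpdef]
    conv_rhs => rw [hspec]
    simp only [Matrix.mul_assoc]
    rw [show star U * (U * (diagonal g * (star U * (U * (diagonal d * star U)))))
        = (star U * U) * (diagonal g * ((star U * U) * (diagonal d * star U))) by
        simp only [Matrix.mul_assoc], hU1]
    simp only [Matrix.one_mul, ← Matrix.mul_assoc, diagonal_mul_diagonal]
    rw [hdgd]
  have hCpCCp : Cp * C * Cp = Cp := by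
    conv_lhs => rw [hspec, hCpdef]
    conv_rhs => rw [hCpdef]
    simp only [Matrix.mul_assoc]
    rw [show star U * (U * (diagonal d * (star U * (U * (diagonal g * star U)))))
        = (star U * U) * (diagonal d * ((star U * U) * (diagonal g * star U))) by
        simp only [Matrix.mul_assoc], hU1]
    simp only [Matrix.one_mul, ← Matrix.mul_assoc, diagonal_mul_diagonal]
    rw [hgdg]
  have hgstar : star g = g := by
    funext i
    simp [hgdef, ← Complex.ofReal_inv]
  have hCpH : Cpᴴ = Cp := by
    rw [hCpdef]
    simp [star_eq_conjTranspose, conjTranspose_mul, diagonal_conjTranspose, hgstar,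
      Matrix.mul_assoc]
  set Q : Matrix (Fin n) (Fin n) ℂ := Cp * C with hQdef
  have hQH : Qᴴ = C * Cp := by rw [hQdef, conjTranspose_mul, hCpH, hC.eq]
  have hCQ : C * Q = C := by rw [hQdef, ← Matrix.mul_assoc, hCCpC]
  have hQHC : Qᴴ * C = C := by rw [hQH, Matrix.mul_assoc, ← hQdef, hCQ]
  -- commuting: C * Cp = Cp * C
  have hcomm : C * Cp = Cp * C := by
    rw [hspec, hCpdef]
    simp only [Matrix.mul_assoc]
    rw [show star U * (U * (diagonal g * star U)) = (star U * U) * (diagonal g * star U) by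
        simp only [Matrix.mul_assoc], hU1,
      show star U * (U * (diagonal d * star U)) = (star U * U) * (diagonal d * star U) by
        simp only [Matrix.mul_assoc], hU1]
    simp only [Matrix.one_mul, ← Matrix.mul_assoc, diagonal_mul_diagonal]
    rw [show (fun i => d i * g i) = (fun i => g i * d i) from hcommfun.symm]
  -- key: B * Q = B
  have hkey : B * Q = B := by
    have expand : (B - B * Q)ᴴ * (B - B * Q)
        = C - C * Q - Qᴴ * C + Qᴴ * (C * Q) := by
      rw [hCdef]
      simp only [conjTranspose_sub, conjTranspose_mul, Matrix.sub_mul, Matrix.mul_sub,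
        Matrix.mul_assoc]
      abel
    have hX : (B - B * Q)ᴴ * (B - B * Q) = 0 := by
      rw [expand, hCQ, hQHC]
      abel
    have := (conjTranspose_mul_self_eq_zero).mp hX
    exact (sub_eq_zero.mp this).symm
  refine ⟨Cp * Bᴴ, ?_, ?_, ?_, ?_⟩
  · calc B * (Cp * Bᴴ) * B = B * (Cp * C) := by
          simp only [hCdef, Matrix.mul_assoc]
      _ = B := hkey
  · calc Cp * Bᴴ * B * (Cp * Bᴴ) = Cp * C * Cp * Bᴴ := by
          simp only [hCdef, Matrix.mul_assoc]
      _ = Cp * Bᴴ := by rw [hCpCCp]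
  · simp only [conjTranspose_mul, conjTranspose_conjTranspose, hCpH, Matrix.mul_assoc]
  · have hPB : Cp * Bᴴ * B = Q := by rw [hQdef, hCdef, Matrix.mul_assoc]
    rw [hPB, hQH, hcomm]

open scoped MatrixOrder in
theorem psd_sqrt_exists {k : ℕ} {M : Matrix (Fin k) (Fin k) ℂ} (hM : M.PosSemidef) :
    ∃ S : Matrix (Fin k) (Fin k) ℂ, Sᴴ = S ∧ S * S = M :=
  ⟨CFC.sqrt M, (CFC.sqrt_nonneg M).posSemidef.1, CFC.sqrt_mul_sqrt_self M hM.nonneg⟩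

/-- Existence of the weighted Moore-Penrose inverse `A†_{M,N}`: for every `A` and
positive definite Hermitian `M`, `N`, there is an `X` satisfying the four weighted
Penrose equations. -/
theorem weighted_moore_penrose_exists {m n : ℕ}
    (A : Matrix (Fin m) (Fin n) ℂ)
    (M : Matrix (Fin m) (Fin m) ℂ) (N : Matrix (Fin n) (Fin n) ℂ)
    (hM : M.PosDef) (hN : N.PosDef) :
    ∃ X : Matrix (Fin n) (Fin m) ℂ,
      A * X * A = A ∧ X * A * X = X ∧
      (M * A * X)ᴴ = M * A * X ∧ (N * X * A)ᴴ = N * X * A := by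
  have hMs := hM.posSemidef
  have hNs := hN.posSemidef
  obtain ⟨S, hSH, hSS⟩ := psd_sqrt_exists hMs
  obtain ⟨T, hTH, hTT⟩ := psd_sqrt_exists hNs
  have hSdet : IsUnit S.det := by
    have h : S.det * S.det = M.det := by rw [← det_mul, hSS]
    have hMdet : M.det ≠ 0 := ne_of_gt hM.det_pos
    refine isUnit_iff_ne_zero.mpr fun h0 => hMdet ?_
    rw [← h, h0, mul_zero]
  have hTdet : IsUnit T.det := by
    have h : T.det * T.det = N.det := by rw [← det_mul, hTT]
    have hNdet : N.det ≠ 0 := ne_of_gt hN.det_pos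
    refine isUnit_iff_ne_zero.mpr fun h0 => hNdet ?_
    rw [← h, h0, mul_zero]
  have hS1 : S⁻¹ * S = 1 := nonsing_inv_mul S hSdet
  have hS2 : S * S⁻¹ = 1 := mul_nonsing_inv S hSdet
  have hT1 : T⁻¹ * T = 1 := nonsing_inv_mul T hTdet
  have hT2 : T * T⁻¹ = 1 := mul_nonsing_inv T hTdet
  -- cancellation helpers
  have cS1 : ∀ {k : ℕ} (X : Matrix (Fin m) (Fin k) ℂ), S⁻¹ * (S * X) = X := fun X => by
    rw [← Matrix.mul_assoc, hS1, Matrix.one_mul]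
  have cS2 : ∀ {k : ℕ} (X : Matrix (Fin m) (Fin k) ℂ), S * (S⁻¹ * X) = X := fun X => by
    rw [← Matrix.mul_assoc, hS2, Matrix.one_mul]
  have cT1 : ∀ {k : ℕ} (X : Matrix (Fin n) (Fin k) ℂ), T⁻¹ * (T * X) = X := fun X => by
    rw [← Matrix.mul_assoc, hT1, Matrix.one_mul]
  have cT2 : ∀ {k : ℕ} (X : Matrix (Fin n) (Fin k) ℂ), T * (T⁻¹ * X) = X := fun X => by
    rw [← Matrix.mul_assoc, hT2, Matrix.one_mul]
  set B : Matrix (Fin m) (Fin n) ℂ := S * A * T⁻¹ with hBdef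
  obtain ⟨P, h1, h2, h3, h4⟩ := moore_penrose_exists B
  have hA : A = S⁻¹ * B * T := by
    rw [hBdef]
    simp only [Matrix.mul_assoc, cS1, hT1, Matrix.mul_one]
  have h1' : ∀ {k : ℕ} (X : Matrix (Fin n) (Fin k) ℂ), B * (P * (B * X)) = B * X := fun X => by
    rw [← Matrix.mul_assoc, ← Matrix.mul_assoc, h1]
  have h2' : ∀ {k : ℕ} (X : Matrix (Fin m) (Fin k) ℂ), P * (B * (P * X)) = P * X := fun X => by
    rw [← Matrix.mul_assoc, ← Matrix.mul_assoc, h2]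
  refine ⟨T⁻¹ * P * S, ?_, ?_, ?_, ?_⟩
  · conv_lhs => rw [hA]
    conv_rhs => rw [hA]
    simp only [Matrix.mul_assoc, cT2, cS2, h1']
  · conv_lhs => rw [hA]
    simp only [Matrix.mul_assoc, cS2, cT2, h2']
  · have hMAX : M * A * (T⁻¹ * P * S) = S * (B * P) * S := by
      conv_lhs => rw [hA, ← hSS]
      simp only [Matrix.mul_assoc, cS2, cT2]
    rw [hMAX]
    simp only [conjTranspose_mul, hSH]
    rw [show Pᴴ * Bᴴ = B * P from (conjTranspose_mul B P).symm.trans h3]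
    simp only [Matrix.mul_assoc]
  · have hNXA : N * (T⁻¹ * P * S) * A = T * (P * B) * T := by
      conv_lhs => rw [hA, ← hTT]
      simp only [Matrix.mul_assoc, cT2, cS2]
    rw [hNXA]
    simp only [conjTranspose_mul, hTH]
    rw [show Bᴴ * Pᴴ = P * B from (conjTranspose_mul P B).symm.trans h4]
    simp only [Matrix.mul_assoc]
end

section
/- Let A' ∈ ℂ^{m×k}, a ∈ ℂ^{m×1}, let M ∈ ℂ^{m×m} be positive definite Hermitian, and let N ∈ ℂ^{(k+1)×(k+1)} be positive definite Hermitian, written in block form N = [[N', l], [l*, n]] with N' ∈ ℂ^{k×k}, l ∈ ℂ^{k×1} and n ∈ ℂ^{1×1} (so N' is positive definite, hence invertible). Suppose X' ∈ ℂ^{k×m} satisfies the four weighted Penrose equations for (A', M, N'): A'X'A' = A', X'A'X' = X', (MA'X')* = MA'X', (N'X'A')* = N'X'A'. Define d := X'a ∈ ℂ^{k×1} and c := a − A'd ∈ ℂ^{m×1}, and assume c ≠ 0. Set b* := ((c*Mc)₀₀)⁻¹ · (c*M) ∈ ℂ^{1×m} (the scalar (c*Mc)₀₀ is nonzero since M is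 positive definite and c ≠ 0), and let X ∈ ℂ^{(k+1)×m} be the matrix whose first k rows form the block X' − (d + (I − X'A')N'⁻¹l)·b* and whose last row is b*. Then, with A := [A' | a] ∈ ℂ^{m×(k+1)} (the matrix A' augmented by the column a), X satisfies the four weighted Penrose equations for (A, M, N): AXA = A, XAX = X, (MAX)* = MAX, (NXA)* = NXA. -/
open Matrix ComplexOrder

lemma posDef_of_fromBlocks_aux {k o : Type*} [Fintype k] [Fintype o]
    {A : Matrix k k ℂ} {B : Matrix k o ℂ} {C : Matrix o k ℂ} {D : Matrix o o ℂ}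
    (h : (Matrix.fromBlocks A B C D).PosDef) : A.PosDef := by
  refine Matrix.PosDef.of_dotProduct_mulVec_pos ?_ ?_
  · ext i j
    have h1 := congrFun (congrFun h.1 (Sum.inl i)) (Sum.inl j)
    simpa [Matrix.conjTranspose_apply] using h1
  · intro x hx
    have hy : (Sum.elim x (0 : o → ℂ)) ≠ 0 := fun h0 => hx (by ext i; exact congrFun h0 (Sum.inl i))
    have hp := h.dotProduct_mulVec_pos hy
    have hs : star (Sum.elim x (0 : o → ℂ)) = Sum.elim (star x) (0 : o → ℂ) := by
      ext (i | i) <;> simp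
    rw [hs, Matrix.fromBlocks_mulVec] at hp
    simpa [sumElim_dotProduct_sumElim] using hp

/-- Recursive step of the Greville/Wang partitioning method (Lemma 2.1) in the
case `c ≠ 0`: if `X'` is the weighted Moore-Penrose inverse of `A'` w.r.t.
`(M, N')`, then the block matrix `X` built from `X'` and `b*` is the weighted
Moore-Penrose inverse of `A = [A' | a]` w.r.t. `(M, N)`. -/
theorem weighted_moore_penrose_partition_step_c_ne_zero {m k : ℕ}
    (A' : Matrix (Fin m) (Fin k) ℂ) (a : Matrix (Fin m) (Fin 1) ℂ)
    (M : Matrix (Fin m) (Fin m) ℂ) (hM : M.PosDef)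
    (N' : Matrix (Fin k) (Fin k) ℂ) (l : Matrix (Fin k) (Fin 1) ℂ)
    (n : Matrix (Fin 1) (Fin 1) ℂ)
    (N : Matrix (Fin k ⊕ Fin 1) (Fin k ⊕ Fin 1) ℂ)
    (hNdef : N = Matrix.fromBlocks N' l lᴴ n)
    (hN : N.PosDef)
    (X' : Matrix (Fin k) (Fin m) ℂ)
    (h1 : A' * X' * A' = A') (h2 : X' * A' * X' = X')
    (h3 : (M * A' * X')ᴴ = M * A' * X') (h4 : (N' * X' * A')ᴴ = N' * X' * A')
    (d : Matrix (Fin k) (Fin 1) ℂ) (hd : d = X' * a)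
    (c : Matrix (Fin m) (Fin 1) ℂ) (hc : c = a - A' * d)
    (hcne : c ≠ 0)
    (b : Matrix (Fin 1) (Fin m) ℂ)
    (hb : b = ((cᴴ * M * c) 0 0)⁻¹ • (cᴴ * M))
    (X : Matrix (Fin k ⊕ Fin 1) (Fin m) ℂ)
    (hX : X = Matrix.fromRows (X' - (d + (1 - X' * A') * N'⁻¹ * l) * b) b)
    (A : Matrix (Fin m) (Fin k ⊕ Fin 1) ℂ)
    (hA : A = Matrix.fromCols A' a) :
    A * X * A = A ∧ X * A * X = X ∧
    (M * A * X)ᴴ = M * A * X ∧ (N * X * A)ᴴ = N * X * A := by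
  obtain ⟨w, hw⟩ : ∃ w, w = (1 - X' * A') * N'⁻¹ * l := ⟨_, rfl⟩
  rw [← hw] at hX
  -- basic Hermitian facts
  have hMs : Mᴴ = M := hM.1
  have hNb : (Matrix.fromBlocks N' l lᴴ n).PosDef := by rw [← hNdef]; exact hN
  have hN' : N'.PosDef := posDef_of_fromBlocks_aux hNb
  have hN's : N'ᴴ = N' := hN'.1
  have hdetu : IsUnit N'.det := isUnit_iff_ne_zero.mpr hN'.det_pos.ne'
  have hN'inv : N' * N'⁻¹ = 1 := Matrix.mul_nonsing_inv N' hdetu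
  have hN'inv' : N'⁻¹ * N' = 1 := Matrix.nonsing_inv_mul N' hdetu
  have hN'is : (N'⁻¹)ᴴ = N'⁻¹ := by rw [Matrix.conjTranspose_nonsing_inv, hN's]
  have hn : nᴴ = n := by
    have hh : (Matrix.fromBlocks N' l lᴴ n)ᴴ = Matrix.fromBlocks N' l lᴴ n := hNb.1
    rw [Matrix.fromBlocks_conjTranspose] at hh
    have := congrArg Matrix.toBlocks₂₂ hh
    simpa [Matrix.toBlocks_fromBlocks₂₂] using this
  -- assoc-normalized Penrose equations
  have h1' : A' * (X' * A') = A' := by rw [← Matrix.mul_assoc, h1]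
  have h2' : X' * (A' * X') = X' := by rw [← Matrix.mul_assoc, h2]
  have h3' : X'ᴴ * A'ᴴ * M = M * A' * X' := by
    calc X'ᴴ * A'ᴴ * M = (M * A' * X')ᴴ := by
          simp [Matrix.conjTranspose_mul, hMs, Matrix.mul_assoc]
      _ = M * A' * X' := h3
  have h4' : (X' * A')ᴴ * N' = N' * (X' * A') := by
    have hh : (N' * (X' * A'))ᴴ = N' * (X' * A') := by
      rw [← Matrix.mul_assoc]; exact h4
    calc (X' * A')ᴴ * N' = (X' * A')ᴴ * N'ᴴ := by rw [hN's]
      _ = (N' * (X' * A'))ᴴ := (Matrix.conjTranspose_mul _ _).symm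
      _ = N' * (X' * A') := hh
  have hXAh : (X' * A')ᴴ = N' * (X' * A') * N'⁻¹ := by
    rw [← h4', Matrix.mul_assoc, hN'inv, Matrix.mul_one]
  -- the scalar γ
  have hγpos : (0 : ℂ) < (cᴴ * M * c) 0 0 := by
    have hx : (fun i => c i 0) ≠ (0 : Fin m → ℂ) := by
      intro h0
      apply hcne
      ext i j
      rw [Subsingleton.elim j 0]
      simpa using congrFun h0 i
    have hp := hM.dotProduct_mulVec_pos hx
    have he : (cᴴ * M * c) 0 0 = star (fun i => c i 0) ⬝ᵥ M *ᵥ (fun i => c i 0) := by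
      simp only [Matrix.mul_apply, dotProduct, Matrix.mulVec, Matrix.conjTranspose_apply,
        Finset.sum_mul, Finset.mul_sum, Pi.star_apply]
      rw [Finset.sum_comm]
      exact Finset.sum_congr rfl fun i _ => Finset.sum_congr rfl fun j _ => by ring
    rw [he]; exact hp
  have hγne : ((cᴴ * M * c) 0 0 : ℂ) ≠ 0 := hγpos.ne'
  have hγstar : star ((cᴴ * M * c) 0 0) = (cᴴ * M * c) 0 0 := by
    have hh : (cᴴ * M * c)ᴴ = cᴴ * M * c := by
      simp [Matrix.conjTranspose_mul, hMs, Matrix.mul_assoc]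
    have := congrFun (congrFun hh 0) 0
    simpa [Matrix.conjTranspose_apply] using this
  have hγinvstar : star (((cᴴ * M * c) 0 0)⁻¹) = ((cᴴ * M * c) 0 0)⁻¹ := by
    rw [star_inv₀, hγstar]
  -- key orthogonality relations
  have hcH : cᴴ = aᴴ - aᴴ * X'ᴴ * A'ᴴ := by
    rw [hc, hd, Matrix.conjTranspose_sub, Matrix.conjTranspose_mul, Matrix.conjTranspose_mul]
  have hcMA : cᴴ * M * A' = 0 := by
    rw [hcH, Matrix.sub_mul, Matrix.sub_mul]
    have hh : aᴴ * X'ᴴ * A'ᴴ * M * A' = aᴴ * M * A' := by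
      calc aᴴ * X'ᴴ * A'ᴴ * M * A' = aᴴ * (X'ᴴ * A'ᴴ * M) * A' := by
            simp [Matrix.mul_assoc]
        _ = aᴴ * (M * A' * X') * A' := by rw [h3']
        _ = aᴴ * M * A' := by simp [Matrix.mul_assoc, h1']
    rw [hh, sub_self]
  have hbA : b * A' = 0 := by
    rw [hb, Matrix.smul_mul, hcMA, smul_zero]
  have hbc : b * c = 1 := by
    rw [hb, Matrix.smul_mul]
    ext i j
    rw [Subsingleton.elim i 0, Subsingleton.elim j 0]
    simp [inv_mul_cancel₀ hγne, Matrix.one_apply]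
  have hXc : X' * c = 0 := by
    rw [hc, hd, Matrix.mul_sub, ← Matrix.mul_assoc, ← Matrix.mul_assoc, h2, sub_self]
  have ha : a = c + A' * d := by rw [hc]; abel
  have hba : b * a = 1 := by
    rw [ha, Matrix.mul_add, hbc, ← Matrix.mul_assoc, hbA, Matrix.zero_mul, add_zero]
  have hAw : A' * w = 0 := by
    have hz : A' * (1 - X' * A') = 0 := by
      rw [Matrix.mul_sub, Matrix.mul_one, ← Matrix.mul_assoc, h1, sub_self]
    rw [hw, ← Matrix.mul_assoc, ← Matrix.mul_assoc, hz, Matrix.zero_mul, Matrix.zero_mul]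
  -- the product A * X
  have hAX : A * X = A' * X' + c * b := by
    have hh : A' * ((d + w) * b) = A' * d * b := by
      rw [← Matrix.mul_assoc, Matrix.mul_add, hAw, add_zero]
    rw [hA, hX, Matrix.fromCols_mul_fromRows, Matrix.mul_sub, ha, hh, Matrix.add_mul]
    abel
  refine ⟨?_, ?_, ?_, ?_⟩
  -- (1) A X A = A
  · have e1 : (A' * X' + c * b) * A' = A' := by
      rw [Matrix.add_mul, Matrix.mul_assoc c b A', hbA, Matrix.mul_zero, add_zero, h1]
    have e2 : (A' * X' + c * b) * a = a := by
      rw [Matrix.add_mul, Matrix.mul_assoc c b a, hba, Matrix.mul_one, Matrix.mul_assoc, ← hd, ha]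
      abel
    rw [hAX, hA, Matrix.mul_fromCols, e1, e2]
  -- (2) X A X = X
  · have e4 : b * (A' * X' + c * b) = b := by
      rw [Matrix.mul_add, ← Matrix.mul_assoc b A' X', hbA, Matrix.zero_mul,
        ← Matrix.mul_assoc b c b, hbc, Matrix.one_mul, zero_add]
    have e3 : (X' - (d + w) * b) * (A' * X' + c * b) = X' - (d + w) * b := by
      have k2 : X' * (c * b) = 0 := by rw [← Matrix.mul_assoc, hXc, Matrix.zero_mul]
      have k3 : (d + w) * b * (A' * X') = 0 := by
        rw [Matrix.mul_assoc, ← Matrix.mul_assoc b A' X', hbA, Matrix.zero_mul, Matrix.mul_zero]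
      have k4 : (d + w) * b * (c * b) = (d + w) * b := by
        rw [Matrix.mul_assoc, ← Matrix.mul_assoc b c b, hbc, Matrix.one_mul]
      rw [Matrix.sub_mul, Matrix.mul_add, Matrix.mul_add, h2', k2, k3, k4, add_zero, zero_add]
    rw [Matrix.mul_assoc, hAX, hX, Matrix.fromRows_mul, e3, e4]
  -- (3) (M A X)ᴴ = M A X
  · have p1 : (M * (A' * X'))ᴴ = M * (A' * X') := by
      rw [← Matrix.mul_assoc]; exact h3
    have p2 : (M * (c * b))ᴴ = M * (c * b) := by
      rw [hb, Matrix.mul_smul, Matrix.mul_smul, Matrix.conjTranspose_smul, hγinvstar]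
      congr 1
      simp [Matrix.conjTranspose_mul, hMs, Matrix.mul_assoc]
    rw [Matrix.mul_assoc, hAX, Matrix.mul_add, Matrix.conjTranspose_add, p1, p2]
  -- (4) (N X A)ᴴ = N X A
  · have q1 : (X' - (d + w) * b) * A' = X' * A' := by
      rw [Matrix.sub_mul, Matrix.mul_assoc, hbA, Matrix.mul_zero, sub_zero]
    have q2 : (X' - (d + w) * b) * a = -w := by
      rw [Matrix.sub_mul, Matrix.mul_assoc, hba, Matrix.mul_one, ← hd]
      abel
    have hXA : X * A = Matrix.fromBlocks (X' * A') (-w)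
        (0 : Matrix (Fin 1) (Fin k) ℂ) (1 : Matrix (Fin 1) (Fin 1) ℂ) := by
      rw [hX, hA, Matrix.fromRows_mul_fromCols, q1, q2, hbA, hba]
    have hNw : N' * w = l - (X' * A')ᴴ * l := by
      rw [hw, hXAh]
      simp only [← Matrix.mul_assoc]
      rw [Matrix.mul_sub, Matrix.mul_one, Matrix.sub_mul, Matrix.sub_mul, hN'inv, Matrix.one_mul,
        Matrix.mul_assoc N' X' A']
    have blk1 : N' * (X' * A') + l * (0 : Matrix (Fin 1) (Fin k) ℂ) = N' * (X' * A') := by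
      rw [Matrix.mul_zero, add_zero]
    have blk2 : N' * (-w) + l * (1 : Matrix (Fin 1) (Fin 1) ℂ) = (X' * A')ᴴ * l := by
      rw [Matrix.mul_neg, hNw, Matrix.mul_one]; abel
    have blk3 : lᴴ * (X' * A') + n * (0 : Matrix (Fin 1) (Fin k) ℂ) = lᴴ * (X' * A') := by
      rw [Matrix.mul_zero, add_zero]
    have blk4 : lᴴ * (-w) + n * (1 : Matrix (Fin 1) (Fin 1) ℂ) = n - lᴴ * w := by
      rw [Matrix.mul_neg, Matrix.mul_one]; abel
    have hNXAeq : N * (X * A) = Matrix.fromBlocks (N' * (X' * A')) ((X' * A')ᴴ * l)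
        (lᴴ * (X' * A')) (n - lᴴ * w) := by
      rw [hXA, hNdef, Matrix.fromBlocks_multiply, blk1, blk2, blk3, blk4]
    -- Hermitian-ness of the bottom-right block
    have hG : (1 - X' * A')ᴴ * N' = N' * (1 - X' * A') := by
      rw [Matrix.conjTranspose_sub, Matrix.conjTranspose_one, Matrix.sub_mul, Matrix.one_mul,
        h4', Matrix.mul_sub, Matrix.mul_one]
    obtain ⟨u, hu⟩ : ∃ u, u = N'⁻¹ * l := ⟨_, rfl⟩
    have hlu : N' * u = l := by rw [hu, ← Matrix.mul_assoc, hN'inv, Matrix.one_mul]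
    have hweq : w = (1 - X' * A') * u := by rw [hw, hu, Matrix.mul_assoc]
    have hlw_eq : lᴴ * w = uᴴ * (N' * ((1 - X' * A') * u)) := by
      rw [← hlu, hweq, Matrix.conjTranspose_mul, hN's, Matrix.mul_assoc]
    have hlwH : (lᴴ * w)ᴴ = lᴴ * w := by
      rw [hlw_eq]
      have hsw : N' * ((1 - X' * A') * u) = (1 - X' * A')ᴴ * (N' * u) := by
        rw [← Matrix.mul_assoc, ← hG, Matrix.mul_assoc]
      rw [hsw]
      simp only [Matrix.conjTranspose_mul, Matrix.conjTranspose_conjTranspose, hN's,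
        Matrix.mul_assoc]
      rw [← Matrix.mul_assoc N' (1 - X' * A') u, ← hG, Matrix.mul_assoc]
    have hP : (N' * (X' * A'))ᴴ = N' * (X' * A') := by
      rw [← Matrix.mul_assoc]; exact h4
    have hQ : ((X' * A')ᴴ * l)ᴴ = lᴴ * (X' * A') := by
      rw [Matrix.conjTranspose_mul, Matrix.conjTranspose_conjTranspose]
    have hR : (lᴴ * (X' * A'))ᴴ = (X' * A')ᴴ * l := by
      rw [Matrix.conjTranspose_mul, Matrix.conjTranspose_conjTranspose]
    have hS : (n - lᴴ * w)ᴴ = n - lᴴ * w := by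
      rw [Matrix.conjTranspose_sub, hn, hlwH]
    rw [Matrix.mul_assoc, hNXAeq, Matrix.fromBlocks_conjTranspose, hP, hQ, hR, hS]
end

section
/- Let A' ∈ ℂ^{m×k}, a ∈ ℂ^{m×1}, let M ∈ ℂ^{m×m} be positive definite Hermitian, and let N ∈ ℂ^{(k+1)×(k+1)} be positive definite Hermitian, written in block form N = [[N', l], [l*, n]] with N' ∈ ℂ^{k×k}, l ∈ ℂ^{k×1} and n ∈ ℂ^{1×1} (so N' is positive definite, hence invertible). Suppose X' ∈ ℂ^{k×m} satisfies the four weighted Penrose equations for (A', M, N'): A'X'A' = A', X'A'X' = X', (MA'X')* = MA'X', (N'X'A')* = N'X'A'. Define d := X'a ∈ ℂ^{k×1} and c := a − A'd, and assume c = 0. Define the 1×1 matrix δ := n + d*N'd − (d*l + l*d) − l*(I − X'A')N'⁻¹l, and assume its entry δ₀₀ is nonzero. Set b* := (δ₀₀)⁻¹ · ((d*N' − l*)X') ∈ ℂ^{1×m}, and let X ∈ ℂ^{(k+1)×m} be the matrix whose first k rows form the block X' − (d + (I − X'A')N'⁻¹l)·b* and whose last row is b*. Then, with A := [A' | a] ∈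 ℂ^{m×(k+1)}, X satisfies the four weighted Penrose equations for (A, M, N): AXA = A, XAX = X, (MAX)* = MAX, (NXA)* = NXA. -/
open Matrix ComplexOrder

private lemma fin1_mul_eq_smul {J : Type*} [Fintype J] (δ : Matrix (Fin 1) (Fin 1) ℂ)
    (B : Matrix (Fin 1) J ℂ) : δ * B = δ 0 0 • B := by
  ext i j
  have hi : i = 0 := Subsingleton.elim i 0
  subst hi
  simp [Matrix.mul_apply, Fin.sum_univ_one]

/-- Recursive step of the Greville/Wang partitioning method (Lemma 2.1) in the
case `c = 0`: if `X'` is the weighted Moore-Penrose inverse of `A'` w.r.t.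
`(M, N')`, then the block matrix `X` built from `X'` and `b* = δ⁻¹(d*N' − l*)X'`
is the weighted Moore-Penrose inverse of `A = [A' | a]` w.r.t. `(M, N)`. -/
theorem weighted_moore_penrose_partition_step_c_eq_zero {m k : ℕ}
    (A' : Matrix (Fin m) (Fin k) ℂ) (a : Matrix (Fin m) (Fin 1) ℂ)
    (M : Matrix (Fin m) (Fin m) ℂ) (hM : M.PosDef)
    (N' : Matrix (Fin k) (Fin k) ℂ) (l : Matrix (Fin k) (Fin 1) ℂ)
    (n : Matrix (Fin 1) (Fin 1) ℂ)
    (N : Matrix (Fin k ⊕ Fin 1) (Fin k ⊕ Fin 1) ℂ)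
    (hNdef : N = Matrix.fromBlocks N' l lᴴ n)
    (hN : N.PosDef)
    (X' : Matrix (Fin k) (Fin m) ℂ)
    (h1 : A' * X' * A' = A') (h2 : X' * A' * X' = X')
    (h3 : (M * A' * X')ᴴ = M * A' * X') (h4 : (N' * X' * A')ᴴ = N' * X' * A')
    (d : Matrix (Fin k) (Fin 1) ℂ) (hd : d = X' * a)
    (c : Matrix (Fin m) (Fin 1) ℂ) (hc : c = a - A' * d)
    (hceq : c = 0)
    (δ : Matrix (Fin 1) (Fin 1) ℂ)
    (hδ : δ = n + dᴴ * N' * d - (dᴴ * l + lᴴ * d) - lᴴ * (1 - X' * A') * N'⁻¹ * l)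
    (hδne : δ 0 0 ≠ 0)
    (b : Matrix (Fin 1) (Fin m) ℂ)
    (hb : b = (δ 0 0)⁻¹ • ((dᴴ * N' - lᴴ) * X'))
    (X : Matrix (Fin k ⊕ Fin 1) (Fin m) ℂ)
    (hX : X = Matrix.fromRows (X' - (d + (1 - X' * A') * N'⁻¹ * l) * b) b)
    (A : Matrix (Fin m) (Fin k ⊕ Fin 1) ℂ)
    (hA : A = Matrix.fromCols A' a) :
    A * X * A = A ∧ X * A * X = X ∧
    (M * A * X)ᴴ = M * A * X ∧ (N * X * A)ᴴ = N * X * A := by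
  have ha : a = A' * d := by
    have h0 : a - A' * d = 0 := by rw [← hc, hceq]
    rwa [sub_eq_zero] at h0
  have hX'a : X' * a = d := hd.symm
  -- basic facts on N'
  have hNherm : Nᴴ = N := hN.1
  rw [hNdef, Matrix.fromBlocks_conjTranspose] at hNherm
  have hN'h : N'ᴴ = N' := by
    have := congrArg Matrix.toBlocks₁₁ hNherm
    simpa [Matrix.toBlocks_fromBlocks₁₁] using this
  have hn : nᴴ = n := by
    have := congrArg Matrix.toBlocks₂₂ hNherm
    simpa [Matrix.toBlocks_fromBlocks₂₂] using this
  have hN'pd : N'.PosDef := by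
    refine Matrix.posDef_iff_dotProduct_mulVec.mpr ⟨hN'h, fun x hx => ?_⟩
    have hx' : (Sum.elim x (0 : Fin 1 → ℂ)) ≠ 0 := by
      intro h
      exact hx (funext fun i => congrFun h (Sum.inl i))
    have hpos := (Matrix.posDef_iff_dotProduct_mulVec.mp hN).2 hx'
    rw [hNdef] at hpos
    have hstar : star (Sum.elim x (0 : Fin 1 → ℂ)) = Sum.elim (star x) (0 : Fin 1 → ℂ) := by
      funext i
      cases i <;> simp
    rw [hstar, Matrix.fromBlocks_mulVec, sumElim_dotProduct_sumElim] at hpos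
    simpa using hpos
  have hU : IsUnit N'.det := (Matrix.isUnit_iff_isUnit_det N').mp hN'pd.isUnit
  have hNinv : N' * N'⁻¹ = 1 := Matrix.mul_nonsing_inv _ hU
  have hNinv' : N'⁻¹ * N' = 1 := Matrix.nonsing_inv_mul _ hU
  have hNinvH : N'⁻¹ᴴ = N'⁻¹ := by
    rw [Matrix.conjTranspose_nonsing_inv, hN'h]
  -- commutation facts
  have hNE : (X' * A')ᴴ * N' = N' * (X' * A') := by
    have h := h4
    rw [Matrix.mul_assoc] at h
    rw [Matrix.conjTranspose_mul, hN'h] at h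
    exact h
  have hNEinv : N' * (X' * A') * N'⁻¹ = (X' * A')ᴴ := by
    rw [← hNE, Matrix.mul_assoc, hNinv, Matrix.mul_one]
  have hEinv : (X' * A') * N'⁻¹ = N'⁻¹ * (X' * A')ᴴ := by
    rw [← hNEinv, ← Matrix.mul_assoc, ← Matrix.mul_assoc, hNinv', one_mul]
  -- basic penrose consequences
  have hA'E : A' * (X' * A') = A' := by rw [← Matrix.mul_assoc]; exact h1
  have hX'AX' : X' * (A' * X') = X' := by rw [← Matrix.mul_assoc]; exact h2
  have hEd : X' * A' * d = d := by rw [Matrix.mul_assoc, ← ha, hX'a]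
  -- δ is hermitian
  have e1 : (dᴴ * N' * d)ᴴ = dᴴ * N' * d := by
    rw [Matrix.mul_assoc, Matrix.conjTranspose_mul, Matrix.conjTranspose_mul,
      Matrix.conjTranspose_conjTranspose, hN'h, Matrix.mul_assoc]
  have e2 : (dᴴ * l)ᴴ = lᴴ * d := by
    rw [Matrix.conjTranspose_mul, Matrix.conjTranspose_conjTranspose]
  have e3 : (lᴴ * d)ᴴ = dᴴ * l := by
    rw [Matrix.conjTranspose_mul, Matrix.conjTranspose_conjTranspose]
  have h5 : (1 - X' * A') * N'⁻¹ = N'⁻¹ * (1 - (X' * A')ᴴ) := by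
    rw [Matrix.sub_mul, Matrix.mul_sub, Matrix.mul_one, Matrix.one_mul, hEinv]
  have hC : ((1 - X' * A') * N'⁻¹)ᴴ = (1 - X' * A') * N'⁻¹ := by
    rw [Matrix.conjTranspose_mul, hNinvH, Matrix.conjTranspose_sub,
      Matrix.conjTranspose_one, ← h5]
  have hmid : (lᴴ * (1 - X' * A') * N'⁻¹ * l)ᴴ = lᴴ * (1 - X' * A') * N'⁻¹ * l := by
    rw [Matrix.mul_assoc lᴴ (1 - X' * A') N'⁻¹, Matrix.conjTranspose_mul,
      Matrix.conjTranspose_mul, hC, Matrix.conjTranspose_conjTranspose,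
      ← Matrix.mul_assoc]
  have hdH : δᴴ = δ := by
    rw [hδ, Matrix.conjTranspose_sub, Matrix.conjTranspose_sub, Matrix.conjTranspose_add,
      Matrix.conjTranspose_add, hmid, hn, e1, e2, e3]
    abel
  have hdr : star (δ 0 0) = δ 0 0 := by
    conv_lhs => rw [← Matrix.conjTranspose_apply δ 0 0, hdH]
  have hbr : star ((δ 0 0)⁻¹) = (δ 0 0)⁻¹ := by
    rw [star_inv₀, hdr]
  -- A'v = a
  have hzero : A' * (1 - X' * A') = 0 := by
    rw [Matrix.mul_sub, Matrix.mul_one, hA'E, sub_self]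
  have hA'v : A' * (d + (1 - X' * A') * N'⁻¹ * l) = a := by
    rw [Matrix.mul_add, ← ha, Matrix.mul_assoc (1 - X' * A') N'⁻¹ l,
      ← Matrix.mul_assoc A' (1 - X' * A') (N'⁻¹ * l), hzero, Matrix.zero_mul, add_zero]
  have hAX : A * X = A' * X' := by
    rw [hA, hX, Matrix.fromCols_mul_fromRows, Matrix.mul_sub,
      ← Matrix.mul_assoc A' _ b, hA'v]
    abel
  have hAXa : A' * X' * a = a := by
    conv_lhs => rw [ha, ← Matrix.mul_assoc, h1]
    exact ha.symm
  have goal1 : A * X * A = A := by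
    rw [hAX, hA, Matrix.mul_fromCols, h1, hAXa]
  have hbAX : b * (A' * X') = b := by
    rw [hb, Matrix.smul_mul, Matrix.mul_assoc, hX'AX']
  have goal2 : X * A * X = X := by
    rw [Matrix.mul_assoc, hAX, hX, Matrix.fromRows_mul, hbAX, Matrix.sub_mul, hX'AX',
      Matrix.mul_assoc, hbAX]
  have goal3 : (M * A * X)ᴴ = M * A * X := by
    rw [Matrix.mul_assoc, hAX, ← Matrix.mul_assoc]
    exact h3
  -- now the hard goal 4
  have hdNE : dᴴ * N' * (X' * A') = dᴴ * N' := by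
    rw [Matrix.mul_assoc dᴴ N' _, ← hNE, ← Matrix.mul_assoc, ← Matrix.conjTranspose_mul,
      hEd]
  have hbA' : b * A' = (δ 0 0)⁻¹ • (dᴴ * N' - lᴴ * (X' * A')) := by
    rw [hb, Matrix.smul_mul, Matrix.mul_assoc, Matrix.sub_mul, hdNE]
  have hba : b * a = (δ 0 0)⁻¹ • ((dᴴ * N' - lᴴ) * d) := by
    rw [hb, Matrix.smul_mul, Matrix.mul_assoc, hX'a]
  have hN'v : N' * (d + (1 - X' * A') * N'⁻¹ * l)
      = (N' * d - (X' * A')ᴴ * l) + l := by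
    have hkey : N' * ((1 - X' * A') * N'⁻¹) = 1 - (X' * A')ᴴ := by
      rw [Matrix.sub_mul, Matrix.one_mul, Matrix.mul_sub, hNinv, ← Matrix.mul_assoc,
        hNEinv]
    rw [Matrix.mul_add, ← Matrix.mul_assoc N' ((1 - X' * A') * N'⁻¹) l, hkey,
      Matrix.sub_mul, Matrix.one_mul]
    abel
  have hR1A' : (X' - (d + (1 - X' * A') * N'⁻¹ * l) * b) * A' = X' * A' - (δ 0 0)⁻¹ • ((d + (1 - X' * A') * N'⁻¹ * l) * (dᴴ * N' - lᴴ * (X' * A'))) := by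
    rw [Matrix.sub_mul, Matrix.mul_assoc (d + (1 - X' * A') * N'⁻¹ * l) b A', hbA', Matrix.mul_smul]
  have hR1a : (X' - (d + (1 - X' * A') * N'⁻¹ * l) * b) * a = d - (δ 0 0)⁻¹ • ((d + (1 - X' * A') * N'⁻¹ * l) * ((dᴴ * N' - lᴴ) * d)) := by
    rw [Matrix.sub_mul, hX'a, Matrix.mul_assoc (d + (1 - X' * A') * N'⁻¹ * l) b a, hba, Matrix.mul_smul]
  have hδv : n - lᴴ * (d + (1 - X' * A') * N'⁻¹ * l) = δ - (dᴴ * N' * d - dᴴ * l) := by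
    rw [hδ, Matrix.mul_add, ← Matrix.mul_assoc lᴴ ((1 - X' * A') * N'⁻¹) l,
      ← Matrix.mul_assoc lᴴ (1 - X' * A') N'⁻¹]
    abel
  have hNEherm : (N' * (X' * A'))ᴴ = N' * (X' * A') := by
    rw [Matrix.conjTranspose_mul, hN'h, hNE]
  have hpPh : (N' * d - (X' * A')ᴴ * l)ᴴ = (dᴴ * N' - lᴴ * (X' * A')) := by
    simp only [Matrix.conjTranspose_sub, Matrix.conjTranspose_mul,
      Matrix.conjTranspose_conjTranspose, hN'h]
  have hPph : (dᴴ * N' - lᴴ * (X' * A'))ᴴ = (N' * d - (X' * A')ᴴ * l) := by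
    simp only [Matrix.conjTranspose_sub, Matrix.conjTranspose_mul,
      Matrix.conjTranspose_conjTranspose, hN'h]
  have hγQ : ((dᴴ * N' - lᴴ) * d)ᴴ = (dᴴ * N' * d - dᴴ * l) := by
    simp only [Matrix.conjTranspose_mul, Matrix.conjTranspose_sub,
      Matrix.conjTranspose_conjTranspose, hN'h, Matrix.mul_sub, Matrix.mul_assoc]
  have hQγ : (dᴴ * N' * d - dᴴ * l)ᴴ = ((dᴴ * N' - lᴴ) * d) := by
    simp only [Matrix.conjTranspose_mul, Matrix.conjTranspose_sub,
      Matrix.conjTranspose_conjTranspose, hN'h, Matrix.sub_mul, Matrix.mul_assoc]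
  have hδP : (δ 0 0)⁻¹ • (δ * (dᴴ * N' - lᴴ * (X' * A'))) = (dᴴ * N' - lᴴ * (X' * A')) := by
    rw [fin1_mul_eq_smul, smul_smul, inv_mul_cancel₀ hδne, one_smul]
  have hδγ : (δ 0 0)⁻¹ • (δ * ((dᴴ * N' - lᴴ) * d)) = ((dᴴ * N' - lᴴ) * d) := by
    rw [fin1_mul_eq_smul, smul_smul, inv_mul_cancel₀ hδne, one_smul]
  have hB11 : N' * ((X' - (d + (1 - X' * A') * N'⁻¹ * l) * b) * A') + l * (b * A')
      = N' * (X' * A') - (δ 0 0)⁻¹ • ((N' * d - (X' * A')ᴴ * l) * (dᴴ * N' - lᴴ * (X' * A'))) := by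
    rw [hR1A', hbA', Matrix.mul_sub, Matrix.mul_smul, Matrix.mul_smul,
      ← Matrix.mul_assoc N' (d + (1 - X' * A') * N'⁻¹ * l) (dᴴ * N' - lᴴ * (X' * A')), hN'v, Matrix.add_mul, smul_add]
    abel
  have hB12 : N' * ((X' - (d + (1 - X' * A') * N'⁻¹ * l) * b) * a) + l * (b * a)
      = N' * d - (δ 0 0)⁻¹ • ((N' * d - (X' * A')ᴴ * l) * ((dᴴ * N' - lᴴ) * d)) := by
    rw [hR1a, hba, Matrix.mul_sub, Matrix.mul_smul, Matrix.mul_smul,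
      ← Matrix.mul_assoc N' (d + (1 - X' * A') * N'⁻¹ * l) ((dᴴ * N' - lᴴ) * d), hN'v, Matrix.add_mul, smul_add]
    abel
  have hB21 : lᴴ * ((X' - (d + (1 - X' * A') * N'⁻¹ * l) * b) * A') + n * (b * A')
      = dᴴ * N' - (δ 0 0)⁻¹ • ((dᴴ * N' * d - dᴴ * l) * (dᴴ * N' - lᴴ * (X' * A'))) := by
    rw [hR1A', hbA', Matrix.mul_sub, Matrix.mul_smul, Matrix.mul_smul,
      ← Matrix.mul_assoc lᴴ (d + (1 - X' * A') * N'⁻¹ * l) (dᴴ * N' - lᴴ * (X' * A'))]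
    have hcomb : (δ 0 0)⁻¹ • (n * (dᴴ * N' - lᴴ * (X' * A'))) - (δ 0 0)⁻¹ • ((lᴴ * (d + (1 - X' * A') * N'⁻¹ * l)) * (dᴴ * N' - lᴴ * (X' * A')))
        = (dᴴ * N' - lᴴ * (X' * A')) - (δ 0 0)⁻¹ • ((dᴴ * N' * d - dᴴ * l) * (dᴴ * N' - lᴴ * (X' * A'))) := by
      rw [← smul_sub, ← Matrix.sub_mul, hδv, Matrix.sub_mul, smul_sub, hδP]
    have hre : lᴴ * (X' * A') - (δ 0 0)⁻¹ • ((lᴴ * (d + (1 - X' * A') * N'⁻¹ * l)) * (dᴴ * N' - lᴴ * (X' * A'))) + (δ 0 0)⁻¹ • (n * (dᴴ * N' - lᴴ * (X' * A')))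
        = lᴴ * (X' * A') + ((δ 0 0)⁻¹ • (n * (dᴴ * N' - lᴴ * (X' * A'))) - (δ 0 0)⁻¹ • ((lᴴ * (d + (1 - X' * A') * N'⁻¹ * l)) * (dᴴ * N' - lᴴ * (X' * A')))) := by abel
    rw [hre, hcomb]
    abel
  have hB22 : lᴴ * ((X' - (d + (1 - X' * A') * N'⁻¹ * l) * b) * a) + n * (b * a)
      = dᴴ * N' * d - (δ 0 0)⁻¹ • ((dᴴ * N' * d - dᴴ * l) * ((dᴴ * N' - lᴴ) * d)) := by
    rw [hR1a, hba, Matrix.mul_sub, Matrix.mul_smul, Matrix.mul_smul,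
      ← Matrix.mul_assoc lᴴ (d + (1 - X' * A') * N'⁻¹ * l) ((dᴴ * N' - lᴴ) * d)]
    have hcomb : (δ 0 0)⁻¹ • (n * ((dᴴ * N' - lᴴ) * d)) - (δ 0 0)⁻¹ • ((lᴴ * (d + (1 - X' * A') * N'⁻¹ * l)) * ((dᴴ * N' - lᴴ) * d))
        = ((dᴴ * N' - lᴴ) * d) - (δ 0 0)⁻¹ • ((dᴴ * N' * d - dᴴ * l) * ((dᴴ * N' - lᴴ) * d)) := by
      rw [← smul_sub, ← Matrix.sub_mul, hδv, Matrix.sub_mul, smul_sub, hδγ]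
    have hre : lᴴ * d - (δ 0 0)⁻¹ • ((lᴴ * (d + (1 - X' * A') * N'⁻¹ * l)) * ((dᴴ * N' - lᴴ) * d)) + (δ 0 0)⁻¹ • (n * ((dᴴ * N' - lᴴ) * d))
        = lᴴ * d + ((δ 0 0)⁻¹ • (n * ((dᴴ * N' - lᴴ) * d)) - (δ 0 0)⁻¹ • ((lᴴ * (d + (1 - X' * A') * N'⁻¹ * l)) * ((dᴴ * N' - lᴴ) * d))) := by abel
    rw [hre, hcomb]
    have hgex : ((dᴴ * N' - lᴴ) * d) = dᴴ * N' * d - lᴴ * d := by rw [Matrix.sub_mul]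
    rw [hgex]
    abel
  have goal4 : (N * X * A)ᴴ = N * X * A := by
    rw [Matrix.mul_assoc N X A, hX, hA, Matrix.fromRows_mul_fromCols, hNdef,
      Matrix.fromBlocks_multiply, hB11, hB12, hB21, hB22,
      Matrix.fromBlocks_conjTranspose, Matrix.fromBlocks_inj]
    refine ⟨?_, ?_, ?_, ?_⟩
    · rw [Matrix.conjTranspose_sub, Matrix.conjTranspose_smul, hbr, hNEherm,
        Matrix.conjTranspose_mul, hpPh, hPph]
    · -- B21ᴴ = B12
      have h12 : (N' * d - (δ 0 0)⁻¹ • ((N' * d - (X' * A')ᴴ * l) * ((dᴴ * N' - lᴴ) * d)))ᴴ = dᴴ * N' - (δ 0 0)⁻¹ • ((dᴴ * N' * d - dᴴ * l) * (dᴴ * N' - lᴴ * (X' * A'))) := by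
        rw [Matrix.conjTranspose_sub, Matrix.conjTranspose_smul, hbr,
          Matrix.conjTranspose_mul (N' * d - (X' * A')ᴴ * l) ((dᴴ * N' - lᴴ) * d), hγQ, hpPh, Matrix.conjTranspose_mul N' d,
          hN'h]
      rw [← h12, Matrix.conjTranspose_conjTranspose]
    · rw [Matrix.conjTranspose_sub, Matrix.conjTranspose_smul, hbr,
        Matrix.conjTranspose_mul (N' * d - (X' * A')ᴴ * l) ((dᴴ * N' - lᴴ) * d), hγQ, hpPh, Matrix.conjTranspose_mul N' d,
        hN'h]
    · rw [Matrix.conjTranspose_sub, Matrix.conjTranspose_smul, hbr, e1,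
        Matrix.conjTranspose_mul, hγQ, hQγ]
  exact ⟨goal1, goal2, goal3, goal4⟩
end
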